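/- Assume f(x) divides g(x), g(x) divides g^perp(x), and g^perp(x) divides f^perp(x). Then the quasi-cyclic code Q := Q_q(f,g,h) satisfies: Q^{perp} is contained in Q; the dimension of Q is 2n - deg(f(x)) - deg(g(x)) (so dim Q - dim Q^{perp} = 2n - 2 deg(f(x)) - 2 deg(g(x))); and every nonzero codeword of Q has Hamming weight at least d_q^e(f,g,h), the minimum of d([g(x)]); d([(x^n-1)/gcd(x^n-1, h(x))]); d([lcm(f(x), g(x)/gcd(g(x), h(x)))]); and d([f(x)]) + d([gcd(h(x)f(x), g(x))]). -/

import Mathlib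

set_option linter.unusedSectionVars false
set_option maxHeartbeats 1000000
set_option synthInstance.maxHeartbeats 400000


open Polynomial Finset

noncomputable section

variable {F : Type*} [Field F] [DecidableEq F]

/-- The vector in `F^n` corresponding to the residue class of a polynomial
in `F[x]/(x^n-1)`: the coefficients of its canonical representative of degree `< n`. -/
def vecOf (n : ℕ) : F[X] →ₗ[F] (Fin n → F) where
  toFun a := fun i => (a %ₘ (X ^ n - 1)).coeff i
  map_add' a b := by
    funext i
    simp [Polynomial.add_modByMonic]
  map_smul' c a := by
    funext i
    simp [Polynomial.smul_modByMonic]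

/-- The quasi-cyclic code `Q_q(f,g,h)`: the `F`-subspace of `F^n × F^n ≃ F^{2n}`
corresponding to the `R`-submodule of `R²` generated by `([f],[h f])` and `(0,[g])`. -/
def QCcode (n : ℕ) (f g h : F[X]) : Submodule F ((Fin n → F) × (Fin n → F)) where
  carrier := {v | ∃ a b : F[X], v = (vecOf n (a * f), vecOf n (a * h * f + b * g))}
  zero_mem' := ⟨0, 0, by simp; rfl⟩
  add_mem' := by
    rintro v w ⟨a1, b1, rfl⟩ ⟨a2, b2, rfl⟩
    refine ⟨a1 + a2, b1 + b2, ?_⟩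
    have h1 : (a1 + a2) * f = a1 * f + a2 * f := by ring
    have h2 : (a1 + a2) * h * f + (b1 + b2) * g
        = (a1 * h * f + b1 * g) + (a2 * h * f + b2 * g) := by ring
    rw [h1, h2, map_add (vecOf n) (a1 * f) (a2 * f),
      map_add (vecOf n) (a1 * h * f + b1 * g) (a2 * h * f + b2 * g)]
    rfl
  smul_mem' := by
    rintro c v ⟨a, b, rfl⟩
    refine ⟨c • a, c • b, ?_⟩
    have h1 : (c • a) * f = c • (a * f) := smul_mul_assoc c a f
    have h2 : (c • a) * h * f + (c • b) * g = c • (a * h * f + b * g) := by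
      rw [smul_add, smul_mul_assoc, smul_mul_assoc, smul_mul_assoc]
    rw [h1, h2, map_smul, map_smul]
    rfl

/-- Hamming weight of a vector. -/
def hWt {n : ℕ} (x : Fin n → F) : ℕ := Nat.card {i : Fin n // x i ≠ 0}

/-- Hamming weight of a vector of `F^{2n}` presented as a pair. -/
def hWt2 {n : ℕ} (v : (Fin n → F) × (Fin n → F)) : ℕ := hWt v.1 + hWt v.2

/-- Symplectic weight. -/
def sWt {n : ℕ} (v : (Fin n → F) × (Fin n → F)) : ℕ :=
  Nat.card {i : Fin n // (v.1 i, v.2 i) ≠ (0, 0)}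

/-- Euclidean inner product on `F^n`. -/
def eInn {n : ℕ} (x y : Fin n → F) : F := ∑ i, x i * y i

/-- Euclidean inner product on `F^{2n}`. -/
def eInn2 {n : ℕ} (x y : (Fin n → F) × (Fin n → F)) : F := eInn x.1 y.1 + eInn x.2 y.2

/-- Symplectic inner product on `F^{2n}`. -/
def sInn {n : ℕ} (x y : (Fin n → F) × (Fin n → F)) : F :=
  ∑ i, (x.1 i * y.2 i - x.2 i * y.1 i)

/-- Hermitian inner product on `F^{2n}` (with respect to `x ↦ x^q`). -/
def hInn2 (q : ℕ) {n : ℕ} (x y : (Fin n → F) × (Fin n → F)) : F :=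
  (∑ i, x.1 i ^ q * y.1 i) + ∑ i, x.2 i ^ q * y.2 i

def sDualSet {n : ℕ} (C : Set ((Fin n → F) × (Fin n → F))) : Set ((Fin n → F) × (Fin n → F)) :=
  {x | ∀ y ∈ C, sInn x y = 0}

def eDualSet {n : ℕ} (C : Set ((Fin n → F) × (Fin n → F))) : Set ((Fin n → F) × (Fin n → F)) :=
  {x | ∀ y ∈ C, eInn2 x y = 0}

def hDualSet (q : ℕ) {n : ℕ} (C : Set ((Fin n → F) × (Fin n → F))) :
    Set ((Fin n → F) × (Fin n → F)) :=
  {x | ∀ y ∈ C, hInn2 q x y = 0}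

/-- `x^n f(1/x)` for `f` of degree `< n`. -/
def barPoly (n : ℕ) (f : F[X]) : F[X] := ∑ i ∈ f.support, C (f.coeff i) * X ^ (n - i)

/-- `f^⊥ = x^{deg f'} f'(1/x)` where `f f' = x^n - 1`. -/
def perpPoly (n : ℕ) (f : F[X]) : F[X] := ((X ^ n - 1) /ₘ f).reverse

/-- coefficientwise `q`-th power. -/
def polyQ (q : ℕ) (f : F[X]) : F[X] := ∑ i ∈ f.support, C (f.coeff i ^ q) * X ^ i

/-- minimum Hamming weight of the cyclic code generated by `[u]`. -/
def cycDist (n : ℕ) (u : F[X]) : ℕ :=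
  sInf {w | ∃ a : F[X], vecOf n (a * u) ≠ 0 ∧ w = hWt (vecOf n (a * u))}

/-- The general QC set generated by `([u₁],[v₁])` and `([u₂],[v₂])`. -/
def QCspan (n : ℕ) (u₁ v₁ u₂ v₂ : F[X]) : Set ((Fin n → F) × (Fin n → F)) :=
  {w | ∃ a b : F[X], w = (vecOf n (a * u₁ + b * u₂), vecOf n (a * v₁ + b * v₂))}

/-- The lower bound `d_q(f,g,h)` for the symplectic weight (a rational number). -/
def dSymp (q n : ℕ) (f g h : F[X]) : ℚ :=
  min (min (min (cycDist n g : ℚ)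
    (cycDist n ((X ^ n - 1) / GCDMonoid.gcd (X ^ n - 1) h) : ℚ))
    (cycDist n (GCDMonoid.lcm f (g / GCDMonoid.gcd g h)) : ℚ))
    ((cycDist n f + cycDist n (GCDMonoid.gcd (h * f) g) + ((q : ℚ) - 1) * cycDist n (GCDMonoid.gcd f g)) / q)

/-- The lower bound `d_q^e(f,g,h)` for the minimum distance. -/
def dEucl (n : ℕ) (f g h : F[X]) : ℕ :=
  min (min (min (cycDist n g)
    (cycDist n ((X ^ n - 1) / GCDMonoid.gcd (X ^ n - 1) h)))
    (cycDist n (GCDMonoid.lcm f (g / GCDMonoid.gcd g h))))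
    (cycDist n f + cycDist n (GCDMonoid.gcd (h * f) g))

section Stmt15Aux

variable {F : Type*} [Field F] [DecidableEq F]

lemma M_monic (n : ℕ) (hn : 0 < n) : (X ^ n - 1 : F[X]).Monic := by
  simpa using monic_X_pow_sub_C (1 : F) hn.ne'

lemma M_degree (n : ℕ) (hn : 0 < n) : (X ^ n - 1 : F[X]).degree = (n : ℕ) := by
  simpa using degree_X_pow_sub_C hn (1 : F)

lemma M_natDegree (n : ℕ) (hn : 0 < n) : (X ^ n - 1 : F[X]).natDegree = n :=
  natDegree_eq_of_degree_eq_some (M_degree n hn)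

lemma modM_eq_of_dvd {n : ℕ} (hn : 0 < n) {P Q : F[X]} (hPQ : (X ^ n - 1 : F[X]) ∣ P - Q) :
    P %ₘ (X ^ n - 1) = Q %ₘ (X ^ n - 1) := by
  obtain ⟨c, hc⟩ := hPQ
  have hP : P = Q + (X ^ n - 1) * c := by linear_combination hc
  rw [hP, add_modByMonic, self_mul_modByMonic (M_monic n hn), add_zero]

lemma vecOf_apply (n : ℕ) (p : F[X]) (i : Fin n) :
    vecOf n p i = (p %ₘ (X ^ n - 1)).coeff (i : ℕ) := rfl

lemma vecOf_eq_of_dvd {n : ℕ} (hn : 0 < n) {P Q : F[X]} (hPQ : (X ^ n - 1 : F[X]) ∣ P - Q) :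
    vecOf n P = vecOf n Q := by
  funext i
  rw [vecOf_apply, vecOf_apply, modM_eq_of_dvd hn hPQ]

lemma eq_zero_of_coeffs {n : ℕ} {P : F[X]} (hdeg : P.degree < (n : ℕ))
    (hc : ∀ i : Fin n, P.coeff i = 0) : P = 0 := by
  ext i
  by_cases hi : i < n
  · simpa using hc ⟨i, hi⟩
  · simp [coeff_eq_zero_of_degree_lt
      (lt_of_lt_of_le hdeg (by exact_mod_cast Nat.le_of_not_lt hi))]

lemma degree_modM_lt {n : ℕ} (hn : 0 < n) (p : F[X]) :
    (p %ₘ (X ^ n - 1 : F[X])).degree < (n : ℕ) := by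
  have := degree_modByMonic_lt p (M_monic n hn)
  rwa [M_degree n hn] at this

lemma natDegree_modM_lt {n : ℕ} (hn : 0 < n) (p : F[X]) :
    (p %ₘ (X ^ n - 1 : F[X])).natDegree < n := by
  by_cases h0 : p %ₘ (X ^ n - 1 : F[X]) = 0
  · simpa [h0] using hn
  · exact (natDegree_lt_iff_degree_lt h0).mpr (degree_modM_lt hn p)

lemma vecOf_eq_zero_iff {n : ℕ} (hn : 0 < n) {P : F[X]} :
    vecOf n P = 0 ↔ (X ^ n - 1 : F[X]) ∣ P := by
  constructor
  · intro hv
    rw [← modByMonic_eq_zero_iff_dvd (M_monic n hn)]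
    refine eq_zero_of_coeffs (degree_modM_lt hn P) fun i => ?_
    have := congrFun hv i
    simpa [vecOf_apply] using this
  · intro hdvd
    funext i
    rw [vecOf_apply, (modByMonic_eq_zero_iff_dvd (M_monic n hn)).mpr hdvd]
    simp

def polyOfVec {n : ℕ} (x : Fin n → F) : F[X] := ∑ i : Fin n, C (x i) * X ^ (i : ℕ)

lemma polyOfVec_degree {n : ℕ} (x : Fin n → F) : (polyOfVec x).degree < (n : ℕ) := by
  refine lt_of_le_of_lt (degree_sum_le _ _) ?_
  rw [Finset.sup_lt_iff (by exact WithBot.bot_lt_coe n)]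
  intro i _
  exact lt_of_le_of_lt (degree_C_mul_X_pow_le _ _) (by exact_mod_cast i.isLt)

lemma vecOf_polyOfVec {n : ℕ} (hn : 0 < n) (x : Fin n → F) : vecOf n (polyOfVec x) = x := by
  funext i
  rw [vecOf_apply, (modByMonic_eq_self_iff (M_monic n hn)).mpr
    (by rw [M_degree n hn]; exact polyOfVec_degree x)]
  rw [polyOfVec, finset_sum_coeff]
  rw [Finset.sum_eq_single i (fun j _ hj => by
    have hne : (i : ℕ) ≠ (j : ℕ) := fun hc => hj (Fin.ext hc.symm)
    simp [coeff_C_mul, coeff_X_pow, hne]) (fun hmem => absurd (Finset.mem_univ i) hmem)]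
  simp [coeff_C_mul, coeff_X_pow]

/-- `P ↦ (P %ₘ (X^n-1)).coeff 0` as a linear map. -/
def modCoeff (n : ℕ) : F[X] →ₗ[F] F := (lcoeff F 0).comp (modByMonicHom (X ^ n - 1))

lemma modCoeff_apply (n : ℕ) (P : F[X]) : modCoeff n P = (P %ₘ (X ^ n - 1)).coeff 0 := rfl

lemma coeff0_modM {n : ℕ} (hn : 0 < n) {P : F[X]} (hP : P.natDegree < 2 * n) :
    (P %ₘ (X ^ n - 1 : F[X])).coeff 0 = P.coeff 0 + P.coeff n := by
  have hXn : (X ^ n : F[X]).Monic := monic_X_pow n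
  have hsplit : P %ₘ X ^ n + X ^ n * (P /ₘ X ^ n) = P := modByMonic_add_div P (X ^ n)
  have hd0 : (P %ₘ X ^ n).degree < (n : ℕ) := by
    simpa [degree_X_pow] using degree_modByMonic_lt P hXn
  have hd1 : (P /ₘ X ^ n).degree < (n : ℕ) := by
    refine lt_of_le_of_lt degree_le_natDegree ?_
    have h2 := natDegree_divByMonic P hXn
    rw [natDegree_X_pow] at h2
    exact_mod_cast (by omega : (P /ₘ X ^ n).natDegree < n)
  have e0 : (X ^ n * (P /ₘ X ^ n)).coeff 0 = 0 := by
    rw [mul_comm, coeff_mul_X_pow']; exact if_neg (by omega)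
  have en : (X ^ n * (P /ₘ X ^ n)).coeff n = (P /ₘ X ^ n).coeff 0 := by
    simpa using coeff_X_pow_mul (P /ₘ X ^ n) n 0
  have hkey : P %ₘ (X ^ n - 1) = P %ₘ X ^ n + P /ₘ X ^ n := by
    have h2 : P = (P %ₘ X ^ n + P /ₘ X ^ n) + (X ^ n - 1) * (P /ₘ X ^ n) := by
      linear_combination -hsplit
    conv_lhs => rw [h2]
    rw [add_modByMonic, self_mul_modByMonic (M_monic n hn), add_zero,
      (modByMonic_eq_self_iff (M_monic n hn)).mpr]
    rw [M_degree n hn]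
    exact lt_of_le_of_lt (degree_add_le _ _) (max_lt hd0 hd1)
  have c0 : P.coeff 0 = (P %ₘ X ^ n).coeff 0 := by
    have := congrArg (fun Q : F[X] => Q.coeff 0) hsplit
    simp only [coeff_add, e0, add_zero] at this
    exact this.symm
  have cn : P.coeff n = (P /ₘ X ^ n).coeff 0 := by
    have := congrArg (fun Q : F[X] => Q.coeff n) hsplit
    simp only [coeff_add, en, coeff_eq_zero_of_degree_lt hd0, zero_add] at this
    exact this.symm
  rw [hkey, coeff_add, c0, cn]

lemma reflect_sum (N : ℕ) (v : F[X]) :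
    reflect N v = ∑ i ∈ v.support, C (v.coeff i) * X ^ (revAt N i) := by
  ext k
  rw [coeff_reflect, finset_sum_coeff]
  simp only [coeff_C_mul, coeff_X_pow, mul_ite, mul_one, mul_zero]
  have hcond : ∀ i : ℕ, (k = revAt N i) ↔ (i = revAt N k) := by
    intro i
    constructor
    · intro hh; rw [hh, revAt_invol]
    · intro hh; rw [hh, revAt_invol]
  simp_rw [hcond]
  rw [Finset.sum_ite_eq' v.support (revAt N k) (fun i => v.coeff i)]
  split_ifs with hmem
  · rfl
  · exact notMem_support_iff.mp hmem

lemma eInn_comm {n : ℕ} (x y : Fin n → F) : eInn x y = eInn y x := by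
  simp [eInn, mul_comm]

lemma eInn_zero_right {n : ℕ} (x : Fin n → F) : eInn x 0 = 0 := by
  simp [eInn]

lemma eInn_eq {n : ℕ} (hn : 0 < n) (p q : F[X]) :
    eInn (vecOf n p) (vecOf n q)
      = ((p * reflect n (q %ₘ (X ^ n - 1))) %ₘ (X ^ n - 1)).coeff 0 := by
  have h1 : (p * reflect n (q %ₘ (X ^ n - 1))) %ₘ (X ^ n - 1)
      = ((p %ₘ (X ^ n - 1)) * reflect n (q %ₘ (X ^ n - 1))) %ₘ (X ^ n - 1) := by
    apply modM_eq_of_dvd hn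
    have h2 : (X ^ n - 1 : F[X]) ∣ p - p %ₘ (X ^ n - 1) :=
      ⟨p /ₘ (X ^ n - 1), by linear_combination -(modByMonic_add_div p (X ^ n - 1))⟩
    have h3 : p * reflect n (q %ₘ (X ^ n - 1)) - (p %ₘ (X ^ n - 1)) * reflect n (q %ₘ (X ^ n - 1))
        = (p - p %ₘ (X ^ n - 1)) * reflect n (q %ₘ (X ^ n - 1)) := by ring
    rw [h3]
    exact h2.mul_right _
  rw [h1]
  by_cases hq0 : q %ₘ (X ^ n - 1 : F[X]) = 0
  · have hv : vecOf n q = 0 := by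
      funext i
      rw [vecOf_apply, hq0]
      simp
    rw [hv, eInn_zero_right, hq0]
    simp
  have hqd : (q %ₘ (X ^ n - 1 : F[X])).natDegree < n := natDegree_modM_lt hn q
  rw [reflect_sum, Finset.mul_sum]
  have hterm : ∀ i ∈ (q %ₘ (X ^ n - 1 : F[X])).support,
      (p %ₘ (X ^ n - 1)) * (C ((q %ₘ (X ^ n - 1)).coeff i) * X ^ (revAt n i))
        = (q %ₘ (X ^ n - 1)).coeff i • ((p %ₘ (X ^ n - 1)) * X ^ (n - i)) := by
    intro i hi
    rw [revAt_le (le_of_lt (lt_of_le_of_lt (le_natDegree_of_mem_supp i hi) hqd)),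
      smul_eq_C_mul]
    ring
  rw [Finset.sum_congr rfl hterm]
  have hRHS : ((∑ i ∈ (q %ₘ (X ^ n - 1 : F[X])).support,
      (q %ₘ (X ^ n - 1)).coeff i • ((p %ₘ (X ^ n - 1)) * X ^ (n - i))) %ₘ (X ^ n - 1)).coeff 0
      = ∑ i ∈ (q %ₘ (X ^ n - 1 : F[X])).support,
        (q %ₘ (X ^ n - 1)).coeff i * (p %ₘ (X ^ n - 1)).coeff i := by
    rw [← modCoeff_apply, map_sum]
    refine Finset.sum_congr rfl fun i hi => ?_
    have hin : i < n := lt_of_le_of_lt (le_natDegree_of_mem_supp i hi) hqd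
    rw [map_smul, smul_eq_mul]
    congr 1
    rw [modCoeff_apply, coeff0_modM hn ?_]
    · rw [coeff_mul_X_pow', coeff_mul_X_pow', if_neg (by omega), if_pos (by omega), zero_add]
      congr 1
      omega
    · refine lt_of_le_of_lt natDegree_mul_le ?_
      rw [natDegree_X_pow]
      have := natDegree_modM_lt hn p
      omega
  rw [hRHS]
  simp only [eInn, vecOf_apply]
  rw [Fin.sum_univ_eq_sum_range
    (fun j => (p %ₘ (X ^ n - 1)).coeff j * (q %ₘ (X ^ n - 1)).coeff j) n]
  rw [← Finset.sum_subset
    (fun i hi => Finset.mem_range.mpr (lt_of_le_of_lt (le_natDegree_of_mem_supp i hi) hqd))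
    (fun i _ hi => by rw [notMem_support_iff.mp hi, mul_zero])]
  exact Finset.sum_congr rfl fun i _ => mul_comm _ _

lemma dvd_of_forall_modCoeff {n : ℕ} (hn : 0 < n) {w : F[X]}
    (H : ∀ b : F[X], modCoeff n (b * w) = 0) : (X ^ n - 1 : F[X]) ∣ w := by
  have hdvd : (X ^ n - 1 : F[X]) ∣ w - w %ₘ (X ^ n - 1) :=
    ⟨w /ₘ (X ^ n - 1), by linear_combination -(modByMonic_add_div w (X ^ n - 1))⟩
  rw [← modByMonic_eq_zero_iff_dvd (M_monic n hn)]
  refine eq_zero_of_coeffs (degree_modM_lt hn w) fun i => ?_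
  have hb := H (X ^ (n - (i : ℕ)))
  rw [modCoeff_apply] at hb
  have h1 : (X ^ (n - (i : ℕ)) * w) %ₘ (X ^ n - 1)
      = (X ^ (n - (i : ℕ)) * (w %ₘ (X ^ n - 1))) %ₘ (X ^ n - 1) := by
    apply modM_eq_of_dvd hn
    have h2 : X ^ (n - (i : ℕ)) * w - X ^ (n - (i : ℕ)) * (w %ₘ (X ^ n - 1))
        = (w - w %ₘ (X ^ n - 1)) * X ^ (n - (i : ℕ)) := by ring
    rw [h2]
    exact hdvd.mul_right _
  rw [h1, coeff0_modM hn ?_] at hb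
  · have hi : (i : ℕ) < n := i.isLt
    rw [mul_comm, coeff_mul_X_pow', coeff_mul_X_pow', if_neg (by omega), if_pos (by omega),
      zero_add, show n - (n - (i : ℕ)) = (i : ℕ) by omega] at hb
    exact hb
  · refine lt_of_le_of_lt natDegree_mul_le ?_
    rw [natDegree_X_pow]
    have := natDegree_modM_lt hn w
    omega

end Stmt15Aux

section Stmt15Quot

variable {F : Type*} [Field F] [DecidableEq F]

/-- The quotient ring `F[x]/(x^n-1)`. -/
abbrev Aq (F : Type*) [Field F] (n : ℕ) := F[X] ⧸ Ideal.span {(X ^ n - 1 : F[X])}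

/-- The quotient map. -/
def piq (n : ℕ) : F[X] →ₐ[F] Aq F n := Ideal.Quotient.mkₐ F _

lemma piq_surjective (n : ℕ) : Function.Surjective (piq (F := F) n) :=
  Ideal.Quotient.mkₐ_surjective F _

lemma piq_M (n : ℕ) : piq (F := F) n (X ^ n - 1) = 0 := by
  rw [piq, Ideal.Quotient.mkₐ_eq_mk, Ideal.Quotient.eq_zero_iff_mem]
  exact Ideal.mem_span_singleton_self _

lemma piq_eq_of_dvd (n : ℕ) {P Q : F[X]} (hd : (X ^ n - 1 : F[X]) ∣ P - Q) :
    piq n P = piq n Q := by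
  obtain ⟨c, hc⟩ := hd
  have hP : P = Q + (X ^ n - 1) * c := by linear_combination hc
  rw [hP, map_add, map_mul, piq_M, zero_mul, add_zero]

lemma dvd_of_piq_eq (n : ℕ) {P Q : F[X]} (hPQ : piq n P = piq n Q) :
    (X ^ n - 1 : F[X]) ∣ P - Q := by
  rw [piq, Ideal.Quotient.mkₐ_eq_mk] at hPQ
  exact Ideal.mem_span_singleton.mp (Ideal.Quotient.eq.mp hPQ)

/-- the inverse of `x` in the quotient ring. -/
def zetaq (n : ℕ) : Aq F n := (piq n X) ^ (n - 1)

lemma piq_X_pow_n (n : ℕ) : (piq (F := F) n X) ^ n = 1 := by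
  calc (piq (F := F) n X) ^ n = piq n (X ^ n) := (map_pow _ _ _).symm
    _ = piq n ((X ^ n - 1) + 1) := congrArg _ (by ring)
    _ = piq n (X ^ n - 1) + piq n 1 := map_add _ _ _
    _ = 1 := by rw [piq_M, map_one, zero_add]

lemma xi_mul_zeta (n : ℕ) (hn : 0 < n) : piq (F := F) n X * zetaq n = 1 := by
  rw [zetaq]
  have h1 : piq (F := F) n X * (piq n X) ^ (n - 1) = (piq n X) ^ n := by
    rw [← pow_succ']
    congr 1
    omega
  rw [h1, piq_X_pow_n n]

lemma zeta_pow_n (n : ℕ) : (zetaq (F := F) n) ^ n = 1 := by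
  rw [zetaq, ← pow_mul, mul_comm (n - 1) n, pow_mul, piq_X_pow_n n, one_pow]

lemma xi_zeta_pow (n : ℕ) (hn : 0 < n) (k : ℕ) :
    (piq (F := F) n X) ^ k * (zetaq n) ^ k = 1 := by
  rw [← mul_pow, xi_mul_zeta n hn, one_pow]

lemma zeta_pow_mul_xi (n : ℕ) (hn : 0 < n) {i N : ℕ} (hiN : i ≤ N) :
    (zetaq (F := F) n) ^ N * (piq n X) ^ (N - i) = (zetaq n) ^ i := by
  have h1 : (zetaq (F := F) n) ^ N = (zetaq n) ^ i * (zetaq n) ^ (N - i) := by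
    rw [← pow_add]
    congr 1
    omega
  rw [h1, mul_assoc, mul_comm ((zetaq (F := F) n) ^ (N - i)), xi_zeta_pow n hn, mul_one]

lemma zeta_pow_sub (n : ℕ) (hn : 0 < n) {i : ℕ} (hi : i ≤ n) :
    (zetaq (F := F) n) ^ (n - i) = (piq n X) ^ i := by
  have h1 : (piq (F := F) n X) ^ i
      = (piq n X) ^ i * ((piq n X) ^ (n - i) * (zetaq n) ^ (n - i)) := by
    rw [xi_zeta_pow n hn, mul_one]
  rw [h1, ← mul_assoc, ← pow_add, show i + (n - i) = n by omega, piq_X_pow_n n, one_mul]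

/-- the "bar" homomorphism `x ↦ x^{-1}`. -/
def tauq (n : ℕ) : F[X] →ₐ[F] Aq F n := aeval (zetaq n)

lemma tauq_C (n : ℕ) (c : F) : tauq (F := F) n (C c) = algebraMap F (Aq F n) c := aeval_C _ _

lemma tauq_X (n : ℕ) : tauq (F := F) n X = zetaq n := aeval_X _

lemma piq_C (n : ℕ) (c : F) : piq (F := F) n (C c) = algebraMap F (Aq F n) c := by
  rw [← Polynomial.algebraMap_eq]
  exact (piq n).commutes c

lemma tauq_reverse (n : ℕ) (hn : 0 < n) (w : F[X]) :
    tauq (F := F) n w = (zetaq n) ^ w.natDegree * piq n (w.reverse) := by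
  rw [Polynomial.reverse, reflect_sum, map_sum, Finset.mul_sum]
  conv_lhs => rw [← sum_C_mul_X_pow_eq w, Polynomial.sum_def, map_sum]
  refine Finset.sum_congr rfl fun i hi => ?_
  have hiN : i ≤ w.natDegree := le_natDegree_of_mem_supp i hi
  rw [revAt_le hiN, map_mul, map_mul, map_pow, map_pow, tauq_X, tauq_C, piq_C,
    mul_left_comm, zeta_pow_mul_xi n hn hiN]

lemma tauq_reflect (n : ℕ) (hn : 0 < n) {w : F[X]} (hw : w.natDegree < n) :
    tauq (F := F) n (reflect n w) = piq n w := by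
  rw [reflect_sum, map_sum]
  conv_rhs => rw [← sum_C_mul_X_pow_eq w, Polynomial.sum_def, map_sum]
  refine Finset.sum_congr rfl fun i hi => ?_
  have hi' : i ≤ n := le_of_lt (lt_of_le_of_lt (le_natDegree_of_mem_supp i hi) hw)
  rw [revAt_le hi', map_mul, map_mul, map_pow, map_pow, tauq_X, tauq_C, piq_C,
    zeta_pow_sub n hn hi']

end Stmt15Quot

section Stmt15Dim

variable {F : Type*} [Field F] [DecidableEq F]

/-- multiplication by `u` followed by reduction: its range is the cyclic code of `u`. -/
def cycMap (n : ℕ) (u : F[X]) : F[X] →ₗ[F] (Fin n → F) :=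
  (vecOf n).comp (LinearMap.mulRight F u)

lemma cycMap_apply (n : ℕ) (u a : F[X]) : cycMap n u a = vecOf n (a * u) := rfl

lemma finrank_cyc {n : ℕ} (hn : 0 < n) {u : F[X]} (hu : u.Monic) (hud : u.natDegree ≤ n)
    (hdvd : u ∣ X ^ n - 1) :
    Module.finrank F (LinearMap.range (cycMap n u)) = n - u.natDegree := by
  have huu' : u * ((X ^ n - 1) /ₘ u) = X ^ n - 1 := by
    have h := modByMonic_add_div (X ^ n - 1 : F[X]) u
    rwa [(modByMonic_eq_zero_iff_dvd hu).mpr hdvd, zero_add] at h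
  have hu'0 : (X ^ n - 1 : F[X]) /ₘ u ≠ 0 := by
    intro h0
    rw [h0, mul_zero] at huu'
    exact (M_monic n hn).ne_zero huu'.symm
  have hu'mon : ((X ^ n - 1 : F[X]) /ₘ u).Monic := by
    have hlc : u.leadingCoeff * ((X ^ n - 1 : F[X]) /ₘ u).leadingCoeff = 1 := by
      rw [← leadingCoeff_mul, huu']
      exact M_monic n hn
    rwa [hu.leadingCoeff, one_mul] at hlc
  have hu'nd : ((X ^ n - 1 : F[X]) /ₘ u).natDegree = n - u.natDegree := by
    have h2 := natDegree_divByMonic (X ^ n - 1 : F[X]) hu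
    rwa [M_natDegree n hn] at h2
  have hu'deg : ((X ^ n - 1 : F[X]) /ₘ u).degree = ((n - u.natDegree : ℕ) : WithBot ℕ) := by
    rw [degree_eq_natDegree hu'0, hu'nd]
  set ν : degreeLT F (n - u.natDegree) →ₗ[F] (Fin n → F) :=
    (cycMap n u).comp (Submodule.subtype _) with hν
  have hrange : LinearMap.range ν = LinearMap.range (cycMap n u) := by
    apply le_antisymm
    · rintro x ⟨⟨a, ha⟩, rfl⟩
      exact ⟨a, rfl⟩
    · rintro x ⟨a, rfl⟩
      refine ⟨⟨a %ₘ ((X ^ n - 1) /ₘ u), mem_degreeLT.mpr ?_⟩, ?_⟩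
      · rw [← hu'deg]
        exact degree_modByMonic_lt a hu'mon
      · show vecOf n (a %ₘ ((X ^ n - 1) /ₘ u) * u) = vecOf n (a * u)
        apply vecOf_eq_of_dvd hn
        refine ⟨-(a /ₘ ((X ^ n - 1) /ₘ u)), ?_⟩
        have h3 := modByMonic_add_div a ((X ^ n - 1) /ₘ u)
        linear_combination (u : F[X]) * h3 - (a /ₘ ((X ^ n - 1) /ₘ u)) * huu'
  have hinj : Function.Injective ν := by
    rw [injective_iff_map_eq_zero]
    rintro ⟨a, ha⟩ hz
    have hvz : vecOf n (a * u) = 0 := hz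
    rcases eq_or_ne a 0 with rfl | ha0
    · rfl
    · exfalso
      have h1 : a.degree < ((n - u.natDegree : ℕ) : WithBot ℕ) := mem_degreeLT.mp ha
      have h3 : a.natDegree < n - u.natDegree := (natDegree_lt_iff_degree_lt ha0).mpr h1
      have h4 : a * u ≠ 0 := mul_ne_zero ha0 hu.ne_zero
      have hd : (a * u).degree < (n : ℕ) := by
        rw [degree_eq_natDegree h4]
        have h2 : (a * u).natDegree = a.natDegree + u.natDegree := natDegree_mul ha0 hu.ne_zero
        exact_mod_cast (by omega : (a * u).natDegree < n)
      have h5 : (a * u) %ₘ (X ^ n - 1) = a * u :=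
        (modByMonic_eq_self_iff (M_monic n hn)).mpr (by rwa [M_degree n hn])
      have h6 : a * u = 0 := by
        refine eq_zero_of_coeffs hd fun i => ?_
        have h7 := congrFun hvz i
        rwa [vecOf_apply, h5] at h7
      exact h4 h6
  rw [← hrange, LinearMap.finrank_range_of_inj hinj, (Polynomial.degreeLTEquiv F _).finrank_eq,
    Module.finrank_fin_fun]

lemma finrank_QC {n : ℕ} (hn : 0 < n) (f g h : F[X]) (hf : f.Monic) (hg : g.Monic)
    (hfn : f.natDegree ≤ n) (hgn : g.natDegree ≤ n)
    (hfdvd : f ∣ X ^ n - 1) (hgdvd : g ∣ X ^ n - 1) :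
    Module.finrank F (QCcode n f g h) = (n - f.natDegree) + (n - g.natDegree) := by
  set L : QCcode n f g h →ₗ[F] (Fin n → F) :=
    (LinearMap.fst F (Fin n → F) (Fin n → F)).comp (Submodule.subtype _) with hL
  have hrank := LinearMap.finrank_range_add_finrank_ker L
  have hr : LinearMap.range L = LinearMap.range (cycMap n f) := by
    apply le_antisymm
    · rintro x ⟨⟨v, hv⟩, rfl⟩
      obtain ⟨a, b, hab⟩ := hv
      refine ⟨a, ?_⟩
      show vecOf n (a * f) = v.1
      rw [hab]
    · rintro x ⟨a, rfl⟩
      exact ⟨⟨(vecOf n (a * f), vecOf n (a * h * f + 0 * g)), ⟨a, 0, rfl⟩⟩, rfl⟩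
  set K : LinearMap.ker L →ₗ[F] (Fin n → F) :=
    (LinearMap.snd F (Fin n → F) (Fin n → F)).comp
      ((Submodule.subtype _).comp (Submodule.subtype _)) with hK
  have hKinj : Function.Injective K := by
    rw [injective_iff_map_eq_zero]
    rintro ⟨⟨v, hv⟩, hker⟩ hz
    have h1 : v.1 = 0 := hker
    have h2 : v.2 = 0 := hz
    ext
    · rw [h1]; rfl
    · rw [h2]; rfl
  have hKr : LinearMap.range K = LinearMap.range (cycMap n g) := by
    apply le_antisymm
    · rintro x ⟨⟨⟨v, hv⟩, hker⟩, rfl⟩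
      obtain ⟨a, b, hab⟩ := hv
      have h1 : vecOf n (a * f) = 0 := by
        have h1' : v.1 = 0 := hker
        rw [hab] at h1'
        exact h1'
      have h2 : (X ^ n - 1 : F[X]) ∣ a * f := (vecOf_eq_zero_iff hn).mp h1
      refine ⟨b, ?_⟩
      have h3 : vecOf n (a * h * f + b * g) = vecOf n (b * g) := by
        apply vecOf_eq_of_dvd hn
        have he : a * h * f + b * g - b * g = (a * f) * h := by ring
        rw [he]
        exact h2.mul_right _
      show vecOf n (b * g) = v.2
      rw [hab, ← h3]
    · rintro x ⟨b, rfl⟩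
      refine ⟨⟨⟨(vecOf n ((0 : F[X]) * f), vecOf n ((0 : F[X]) * h * f + b * g)), ⟨0, b, rfl⟩⟩, ?_⟩, ?_⟩
      · show vecOf n ((0 : F[X]) * f) = 0
        rw [zero_mul, map_zero]
      · show vecOf n ((0 : F[X]) * h * f + b * g) = vecOf n (b * g)
        congr 1
        ring
  have h7 : Module.finrank F (LinearMap.ker L) = n - g.natDegree := by
    rw [← LinearMap.finrank_range_of_inj hKinj, hKr, finrank_cyc hn hg hgn hgdvd]
  rw [← hrank, hr, h7, finrank_cyc hn hf hfn hfdvd]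

lemma hWt_zero {n : ℕ} : hWt (0 : Fin n → F) = 0 := by
  have : IsEmpty {i : Fin n // (0 : Fin n → F) i ≠ 0} := ⟨fun ⟨_, hi⟩ => hi rfl⟩
  exact Nat.card_of_isEmpty

lemma cycDist_le (n : ℕ) (u a : F[X]) (hne : vecOf n (a * u) ≠ 0) :
    cycDist n u ≤ hWt (vecOf n (a * u)) :=
  Nat.sInf_le ⟨a, hne, rfl⟩

end Stmt15Dim

/-- if `f ∣ g ∣ g^⊥ ∣ f^⊥`, then `Q_q(f,g,h)` contains its Euclidean dual,
has dimension `2n - deg f - deg g`, and minimum weight at least `d_q^e(f,g,h)`. -/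
theorem stmt15 [Fintype F] (n : ℕ) (hn : 0 < n) (f g h : F[X])
    (hf : f.Monic) (hg : g.Monic) (hh : h.Monic)
    (hfd : f.degree < n) (hgd : g.degree < n) (hhd : h.degree < n)
    (hfdvd : f ∣ X ^ n - 1) (hgdvd : g ∣ X ^ n - 1)
    (hd1 : f ∣ g) (hd2 : g ∣ perpPoly n g) (hd3 : perpPoly n g ∣ perpPoly n f) :
    eDualSet (QCcode n f g h : Set ((Fin n → F) × (Fin n → F))) ⊆
        (QCcode n f g h : Set ((Fin n → F) × (Fin n → F))) ∧
      Module.finrank F (QCcode n f g h) = 2 * n - f.natDegree - g.natDegree ∧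
      ∀ v ∈ QCcode n f g h, v ≠ 0 → hWt2 v ≥ dEucl n f g h := by
  have hfn : f.natDegree < n := (natDegree_lt_iff_degree_lt hf.ne_zero).mpr hfd
  have hgn : g.natDegree < n := (natDegree_lt_iff_degree_lt hg.ne_zero).mpr hgd
  refine ⟨?dual, ?dim, ?dist⟩
  case dim =>
    rw [finrank_QC hn f g h hf hg hfn.le hgn.le hfdvd hgdvd]
    omega
  case dist =>
    intro v hv hvne
    obtain ⟨a, b, hab⟩ := hv
    have hle1 : dEucl n f g h ≤ cycDist n g := by
      unfold dEucl
      exact le_trans (min_le_left _ _) (le_trans (min_le_left _ _) (min_le_left _ _))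
    have hle3 : dEucl n f g h ≤ cycDist n (GCDMonoid.lcm f (g / GCDMonoid.gcd g h)) := by
      unfold dEucl
      exact le_trans (min_le_left _ _) (min_le_right _ _)
    have hle4 : dEucl n f g h ≤ cycDist n f + cycDist n (GCDMonoid.gcd (h * f) g) := by
      unfold dEucl
      exact min_le_right _ _
    rw [ge_iff_le, hab]
    show dEucl n f g h ≤ hWt (vecOf n (a * f)) + hWt (vecOf n (a * h * f + b * g))
    by_cases h1 : vecOf n (a * f) = 0
    · have h2 : (X ^ n - 1 : F[X]) ∣ a * f := (vecOf_eq_zero_iff hn).mp h1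
      have h3 : vecOf n (a * h * f + b * g) = vecOf n (b * g) := by
        apply vecOf_eq_of_dvd hn
        have he : a * h * f + b * g - b * g = a * f * h := by ring
        rw [he]
        exact h2.mul_right _
      have h4 : vecOf n (b * g) ≠ 0 := by
        intro h0
        apply hvne
        rw [hab, h1, h3, h0]
        rfl
      calc dEucl n f g h ≤ cycDist n g := hle1
        _ ≤ hWt (vecOf n (b * g)) := cycDist_le n g b h4
        _ ≤ hWt (vecOf n (a * f)) + hWt (vecOf n (a * h * f + b * g)) := by
            rw [h1, h3, hWt_zero, zero_add]
    by_cases h2 : vecOf n (a * h * f + b * g) = 0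
    · have h3 : (X ^ n - 1 : F[X]) ∣ a * h * f + b * g := (vecOf_eq_zero_iff hn).mp h2
      have h4 : g ∣ a * h * f := by
        have h5 : g ∣ a * h * f + b * g := hgdvd.trans h3
        have h6 := dvd_sub h5 (dvd_mul_left g b)
        simpa using h6
      have he0 : GCDMonoid.gcd g h ≠ 0 := fun h0 => hg.ne_zero ((gcd_eq_zero_iff g h).mp h0).1
      have hge : GCDMonoid.gcd g h * (g / GCDMonoid.gcd g h) = g :=
        EuclideanDomain.mul_div_cancel' he0 (gcd_dvd_left g h)
      have hhe : GCDMonoid.gcd g h * (h / GCDMonoid.gcd g h) = h :=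
        EuclideanDomain.mul_div_cancel' he0 (gcd_dvd_right g h)
      have hcop : GCDMonoid.gcd (g / GCDMonoid.gcd g h) (h / GCDMonoid.gcd g h) = 1 := by
        have h6 := _root_.gcd_mul_left (GCDMonoid.gcd g h) (g / GCDMonoid.gcd g h)
          (h / GCDMonoid.gcd g h)
        rw [hge, hhe, _root_.normalize_gcd] at h6
        exact (mul_left_cancel₀ he0 (by rw [mul_one, ← h6])).symm
      have hg1 : (g / GCDMonoid.gcd g h) ∣ a * f * (h / GCDMonoid.gcd g h) := by
        obtain ⟨c, hc⟩ := h4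
        refine ⟨c, mul_left_cancel₀ he0 ?_⟩
        calc GCDMonoid.gcd g h * (a * f * (h / GCDMonoid.gcd g h))
            = a * (GCDMonoid.gcd g h * (h / GCDMonoid.gcd g h)) * f := by ring
          _ = a * h * f := by rw [hhe]
          _ = g * c := hc
          _ = GCDMonoid.gcd g h * (g / GCDMonoid.gcd g h * c) := by rw [← mul_assoc, hge]
      have hg1' : (g / GCDMonoid.gcd g h) ∣ a * f := by
        have h8 : (g / GCDMonoid.gcd g h) ∣
            GCDMonoid.gcd ((a * f) * (g / GCDMonoid.gcd g h))
              ((a * f) * (h / GCDMonoid.gcd g h)) :=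
          dvd_gcd (dvd_mul_left _ _) hg1
        rw [_root_.gcd_mul_left, hcop, mul_one] at h8
        exact dvd_normalize_iff.mp h8
      obtain ⟨t, ht⟩ := lcm_dvd (dvd_mul_left f a) hg1'
      have h9 : vecOf n (a * f) = vecOf n (t * GCDMonoid.lcm f (g / GCDMonoid.gcd g h)) := by
        rw [ht, mul_comm]
      calc dEucl n f g h ≤ cycDist n (GCDMonoid.lcm f (g / GCDMonoid.gcd g h)) := hle3
        _ ≤ hWt (vecOf n (t * GCDMonoid.lcm f (g / GCDMonoid.gcd g h))) :=
            cycDist_le _ _ _ (h9 ▸ h1)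
        _ ≤ _ := by rw [← h9]; exact Nat.le_add_right _ _
    · have hw : GCDMonoid.gcd (h * f) g ∣ a * h * f + b * g :=
        dvd_add ((gcd_dvd_left (h * f) g).trans ⟨a, by ring⟩)
          ((gcd_dvd_right (h * f) g).trans ⟨b, by ring⟩)
      obtain ⟨s, hs⟩ := hw
      have h9 : vecOf n (a * h * f + b * g) = vecOf n (s * GCDMonoid.gcd (h * f) g) := by
        rw [hs, mul_comm]
      calc dEucl n f g h ≤ cycDist n f + cycDist n (GCDMonoid.gcd (h * f) g) := hle4
        _ ≤ hWt (vecOf n (a * f)) + hWt (vecOf n (s * GCDMonoid.gcd (h * f) g)) :=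
            Nat.add_le_add (cycDist_le n f a h1) (cycDist_le _ _ _ (h9 ▸ h2))
        _ = _ := by rw [← h9]
  case dual =>
    intro x hx
    set u : F[X] := polyOfVec x.1 with hudef
    set v : F[X] := polyOfVec x.2 with hvdef
    have hu : vecOf n u = x.1 := vecOf_polyOfVec hn x.1
    have hv : vecOf n v = x.2 := vecOf_polyOfVec hn x.2
    have Hyp : ∀ a b : F[X],
        eInn x.1 (vecOf n (a * f)) + eInn x.2 (vecOf n (a * h * f + b * g)) = 0 := by
      intro a b
      exact hx (vecOf n (a * f), vecOf n (a * h * f + b * g))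
        (SetLike.mem_coe.mpr ⟨a, b, rfl⟩)
    have C1 : (X ^ n - 1 : F[X]) ∣ g * reflect n (v %ₘ (X ^ n - 1)) := by
      apply dvd_of_forall_modCoeff hn
      intro b
      have h0 := Hyp 0 b
      simp only [zero_mul, zero_add, map_zero, eInn_zero_right] at h0
      rw [← hv, eInn_comm, eInn_eq hn] at h0
      rw [modCoeff_apply, show b * (g * reflect n (v %ₘ (X ^ n - 1)))
          = b * g * reflect n (v %ₘ (X ^ n - 1)) by ring]
      exact h0
    have C2 : (X ^ n - 1 : F[X]) ∣ f * reflect n (u %ₘ (X ^ n - 1))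
        + h * (f * reflect n (v %ₘ (X ^ n - 1))) := by
      apply dvd_of_forall_modCoeff hn
      intro a
      have h0 := Hyp a 0
      simp only [zero_mul, add_zero] at h0
      rw [← hu, ← hv, eInn_comm (vecOf n u), eInn_comm (vecOf n v),
        eInn_eq hn, eInn_eq hn] at h0
      have he : a * (f * reflect n (u %ₘ (X ^ n - 1)) + h * (f * reflect n (v %ₘ (X ^ n - 1))))
          = a * f * reflect n (u %ₘ (X ^ n - 1)) + a * h * f * reflect n (v %ₘ (X ^ n - 1)) := by
        ring
      rw [he, map_add, modCoeff_apply, modCoeff_apply]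
      exact h0
    have hgg' : g * ((X ^ n - 1 : F[X]) /ₘ g) = X ^ n - 1 := by
      have h2 := modByMonic_add_div (X ^ n - 1 : F[X]) g
      rwa [(modByMonic_eq_zero_iff_dvd hg).mpr hgdvd, zero_add] at h2
    have hff' : f * ((X ^ n - 1 : F[X]) /ₘ f) = X ^ n - 1 := by
      have h2 := modByMonic_add_div (X ^ n - 1 : F[X]) f
      rwa [(modByMonic_eq_zero_iff_dvd hf).mpr hfdvd, zero_add] at h2
    obtain ⟨t, ht⟩ : ∃ t, reflect n (v %ₘ (X ^ n - 1)) = ((X ^ n - 1 : F[X]) /ₘ g) * t := by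
      obtain ⟨c, hc⟩ := C1
      refine ⟨c, mul_left_cancel₀ hg.ne_zero ?_⟩
      rw [← mul_assoc, hgg']
      exact hc
    obtain ⟨r, hr⟩ : ∃ r, reflect n (u %ₘ (X ^ n - 1)) + h * reflect n (v %ₘ (X ^ n - 1))
        = ((X ^ n - 1 : F[X]) /ₘ f) * r := by
      obtain ⟨c, hc⟩ := C2
      refine ⟨c, mul_left_cancel₀ hf.ne_zero ?_⟩
      rw [← mul_assoc, hff', ← hc]
      ring
    have hτv : tauq n (reflect n (v %ₘ (X ^ n - 1))) = piq n v := by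
      rw [tauq_reflect n hn (natDegree_modM_lt hn v)]
      exact piq_eq_of_dvd n ⟨-(v /ₘ (X ^ n - 1)), by
        linear_combination modByMonic_add_div v (X ^ n - 1)⟩
    have hτu : tauq n (reflect n (u %ₘ (X ^ n - 1))) = piq n u := by
      rw [tauq_reflect n hn (natDegree_modM_lt hn u)]
      exact piq_eq_of_dvd n ⟨-(u /ₘ (X ^ n - 1)), by
        linear_combination modByMonic_add_div u (X ^ n - 1)⟩
    obtain ⟨G₂, hG₂⟩ : f ∣ perpPoly n g := hd1.trans hd2
    obtain ⟨F₂, hF₂⟩ : f ∣ perpPoly n f := (hd1.trans hd2).trans hd3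
    obtain ⟨F₃, hF₃⟩ : g ∣ perpPoly n f := hd2.trans hd3
    obtain ⟨G₃, hG₃⟩ := hd2
    have hPv : piq n v = piq n (perpPoly n g)
        * ((zetaq n) ^ (((X ^ n - 1 : F[X]) /ₘ g).natDegree) * tauq n t) := by
      rw [← hτv, ht, map_mul, tauq_reverse n hn ((X ^ n - 1 : F[X]) /ₘ g)]
      simp only [perpPoly]
      ring
    have hPu : piq n u = piq n (perpPoly n f)
        * ((zetaq n) ^ (((X ^ n - 1 : F[X]) /ₘ f).natDegree) * tauq n r)
        - tauq n h * piq n v := by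
      have he : reflect n (u %ₘ (X ^ n - 1))
          = ((X ^ n - 1 : F[X]) /ₘ f) * r - h * reflect n (v %ₘ (X ^ n - 1)) := by
        linear_combination hr
      rw [← hτu, he, map_sub, map_mul, map_mul,
        tauq_reverse n hn ((X ^ n - 1 : F[X]) /ₘ f), hτv]
      simp only [perpPoly]
      ring
    obtain ⟨a, ha⟩ := piq_surjective (F := F) n
      ((zetaq n) ^ (((X ^ n - 1 : F[X]) /ₘ f).natDegree) * tauq n r * piq n F₂
        - tauq n h * ((zetaq n) ^ (((X ^ n - 1 : F[X]) /ₘ g).natDegree) * tauq n t) * piq n G₂)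
    have hfZ : piq n (a * f) = piq n u := by
      rw [map_mul, ha, hPu, hPv, hF₂, hG₂]
      simp only [map_mul]
      ring
    have hfZ' : piq n a * piq n f = piq n u := by
      rw [← map_mul]
      exact hfZ
    obtain ⟨b, hb⟩ := piq_surjective (F := F) n
      ((zetaq n) ^ (((X ^ n - 1 : F[X]) /ₘ g).natDegree) * tauq n t * piq n G₃
        - piq n h * ((zetaq n) ^ (((X ^ n - 1 : F[X]) /ₘ f).natDegree) * tauq n r) * piq n F₃
        + piq n h * tauq n h
          * ((zetaq n) ^ (((X ^ n - 1 : F[X]) /ₘ g).natDegree) * tauq n t) * piq n G₃)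
    have hgW : piq n (a * h * f + b * g) = piq n v := by
      have h5 : piq n (a * h * f + b * g)
          = piq n h * (piq n a * piq n f) + piq n b * piq n g := by
        simp only [map_add, map_mul]
        ring
      rw [h5, hfZ', hb, hPu, hPv, hF₃, hG₃]
      simp only [map_mul]
      ring
    refine SetLike.mem_coe.mpr ⟨a, b, ?_⟩
    have e1 : vecOf n (a * f) = x.1 := by
      rw [← hu]
      exact vecOf_eq_of_dvd hn (dvd_of_piq_eq n hfZ)
    have e2 : vecOf n (a * h * f + b * g) = x.2 := by
      rw [← hv]
      exact vecOf_eq_of_dvd hn (dvd_of_piq_eq n hgW)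
    rw [e1, e2]

end
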